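/- Let A and B be J*-algebras and h : A → B a mapping with h(0) = 0. Suppose φ : A × A × A → [0,∞) satisfies φ̃(x,y,z) := (1/2) ∑_{n=0}^∞ 2^{-n} φ(2^n x, 2^n y, 2^n z) < ∞ and ‖h(μx + μy + z z* z) − μh(x) − μh(y) − h(z)h(z)*h(z)‖ ≤ φ(x,y,z) for all μ ∈ ℂ with |μ| = 1 and all x, y, z ∈ A. Then there exists a unique J*-homomorphism T : A → B such that ‖h(x) − T(x)‖ ≤ φ̃(x,x,0) for all x ∈ A. -/

import Mathlib

open Filter Topology

/-- The Jordan triple cube `x ↦ x x* x` inside a subspace closed under it. -/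
def jcube {𝓐 : Type*} [NormedRing 𝓐] [StarRing 𝓐] [NormedAlgebra ℂ 𝓐]
    (S : Submodule ℂ 𝓐) (hS : ∀ a ∈ S, a * star a * a ∈ S) (x : S) : S :=
  ⟨(x : 𝓐) * star (x : 𝓐) * (x : 𝓐), hS x x.2⟩

set_option maxHeartbeats 1000000 in
/-- Stability of J*-homomorphisms (Theorem 2.2). -/
theorem stability_jstar_hom
    {𝓐 𝓑 : Type*}
    [NormedRing 𝓐] [StarRing 𝓐] [CStarRing 𝓐] [NormedAlgebra ℂ 𝓐] [StarModule ℂ 𝓐]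
    [CompleteSpace 𝓐]
    [NormedRing 𝓑] [StarRing 𝓑] [CStarRing 𝓑] [NormedAlgebra ℂ 𝓑] [StarModule ℂ 𝓑]
    [CompleteSpace 𝓑]
    (A : Submodule ℂ 𝓐) (hA : IsClosed (A : Set 𝓐)) (hAc : ∀ a ∈ A, a * star a * a ∈ A)
    (B : Submodule ℂ 𝓑) (hB : IsClosed (B : Set 𝓑)) (hBc : ∀ b ∈ B, b * star b * b ∈ B)
    (h : A → B) (h0 : h 0 = 0)
    (φ : A → A → A → ℝ) (hφ : ∀ x y z, 0 ≤ φ x y z)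
    (hsum : ∀ x y z : A,
      Summable fun n : ℕ => φ ((2:ℂ)^n • x) ((2:ℂ)^n • y) ((2:ℂ)^n • z) / 2^n)
    (hineq : ∀ (μ : ℂ), ‖μ‖ = 1 → ∀ x y z : A,
      ‖((h (μ • x + μ • y + jcube A hAc z) : 𝓑)
        - μ • (h x : 𝓑) - μ • (h y : 𝓑)
        - (h z : 𝓑) * star (h z : 𝓑) * (h z : 𝓑))‖ ≤ φ x y z) :
    ∃! T : A → B,
      (∀ x y, T (x + y) = T x + T y) ∧
      (∀ (c : ℂ) (x : A), T (c • x) = c • T x) ∧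
      (∀ z : A, (T (jcube A hAc z) : 𝓑) = (T z : 𝓑) * star (T z : 𝓑) * (T z : 𝓑)) ∧
      (∀ x : A, ‖(h x : 𝓑) - (T x : 𝓑)‖
        ≤ (1/2) * ∑' n : ℕ, φ ((2:ℂ)^n • x) ((2:ℂ)^n • x) 0 / 2^n) := by
  classical
  have jc0 : jcube A hAc 0 = 0 := by
    apply Subtype.ext; simp [jcube]
  -- two basic consequences of the functional inequality
  have keyadd : ∀ (μ : ℂ), ‖μ‖ = 1 → ∀ x y : A,
      ‖(h (μ • x + μ • y) : 𝓑) - μ • (h x : 𝓑) - μ • (h y : 𝓑)‖ ≤ φ x y 0 := by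
    intro μ hμ x y
    simpa [jc0, h0] using hineq μ hμ x y 0
  have keytrip : ∀ z : A,
      ‖(h (jcube A hAc z) : 𝓑) - (h z : 𝓑) * star (h z : 𝓑) * (h z : 𝓑)‖ ≤ φ 0 0 z := by
    intro z
    simpa [h0] using hineq 1 (by simp) 0 0 z
  -- the approximating sequence
  set c : ℕ → ℂ := fun n => ((2:ℂ) ^ n)⁻¹ with hc
  have hcnorm : ∀ n, ‖c n‖ = ((2:ℝ) ^ n)⁻¹ := by
    intro n; simp [hc]
  set F : A → ℕ → 𝓑 := fun x n => c n • (h ((2:ℂ) ^ n • x) : 𝓑) with hF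
  have hstep : ∀ (x : A) (n : ℕ),
      ‖F x (n+1) - F x n‖ ≤ (1/2) * (φ ((2:ℂ)^n • x) ((2:ℂ)^n • x) 0 / 2^n) := by
    intro x n
    set a := (2:ℂ)^n • x with ha
    have key := keyadd 1 (by simp) a a
    simp only [one_smul] at key
    have e2 : (2:ℂ)^(n+1) • x = a + a := by
      rw [ha, ← two_smul ℂ, smul_smul, ← pow_succ']
    have e1 : F x (n+1) - F x n
        = c (n+1) • ((h (a+a) : 𝓑) - (h a : 𝓑) - (h a : 𝓑)) := by
      simp only [hF, e2, ← ha]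
      have hcc : c n = c (n+1) + c (n+1) := by
        simp only [hc]; rw [pow_succ]
        field_simp
        ring
      rw [hcc, add_smul, smul_sub, smul_sub]
      abel
    calc ‖F x (n+1) - F x n‖
        = ‖c (n+1)‖ * ‖(h (a+a) : 𝓑) - (h a : 𝓑) - (h a : 𝓑)‖ := by rw [e1, norm_smul]
      _ ≤ ((2:ℝ)^(n+1))⁻¹ * φ a a 0 := by
          rw [hcnorm]
          exact mul_le_mul_of_nonneg_left key (by positivity)
      _ = (1/2) * (φ a a 0 / 2^n) := by rw [pow_succ]; ring
  have hcauchy : ∀ x : A, CauchySeq (F x) := by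
    intro x
    have hsm := hsum x x 0
    simp only [smul_zero] at hsm
    refine cauchySeq_of_dist_le_of_summable _ (fun n => ?_) (hsm.mul_left (1/2))
    rw [dist_eq_norm, norm_sub_rev]
    exact hstep x n
  have hex : ∀ x : A, ∃ L, Tendsto (F x) atTop (𝓝 L) :=
    fun x => cauchySeq_tendsto_of_complete (hcauchy x)
  set g : A → 𝓑 := fun x => (hex x).choose with hgdef
  have hg : ∀ x, Tendsto (F x) atTop (𝓝 (g x)) := fun x => (hex x).choose_spec
  have hgB : ∀ x, g x ∈ B := by
    intro x
    refine hB.mem_of_tendsto (hg x) (Eventually.of_forall fun n => ?_)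
    exact B.smul_mem (c n) (h ((2:ℂ)^n • x)).2
  -- the approximation bound
  have hbound : ∀ x : A, ‖(h x : 𝓑) - g x‖
      ≤ (1/2) * ∑' n : ℕ, φ ((2:ℂ)^n • x) ((2:ℂ)^n • x) 0 / 2^n := by
    intro x
    have hsm := hsum x x 0
    simp only [smul_zero] at hsm
    have hd := dist_le_tsum_of_dist_le_of_tendsto₀
      (f := F x) (fun n => (1/2) * (φ ((2:ℂ)^n • x) ((2:ℂ)^n • x) 0 / 2^n))
      (fun n => by rw [dist_eq_norm, norm_sub_rev]; exact hstep x n)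
      (hsm.mul_left (1/2)) (hg x)
    have hF0 : F x 0 = (h x : 𝓑) := by simp [hF, hc]
    rw [hF0, dist_eq_norm] at hd
    rwa [tsum_mul_left] at hd
  -- a convergence helper
  have hcongr : ∀ (u v : ℕ → 𝓑) (L : 𝓑), Tendsto v atTop (𝓝 L) →
      Tendsto (fun n => ‖u n - v n‖) atTop (𝓝 0) → Tendsto u atTop (𝓝 L) := by
    intro u v L hv hn
    have h1 : Tendsto (fun n => u n - v n) atTop (𝓝 0) :=
      tendsto_zero_iff_norm_tendsto_zero.mpr hn
    simpa using h1.add hv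
  -- additivity with unit scalars
  have hmu : ∀ (μ : ℂ), ‖μ‖ = 1 → ∀ x y : A,
      g (μ • x + μ • y) = μ • g x + μ • g y := by
    intro μ hμ x y
    refine tendsto_nhds_unique (hg (μ • x + μ • y)) (hcongr _
      (fun n => μ • F x n + μ • F y n) _
      (((hg x).const_smul μ).add ((hg y).const_smul μ)) ?_)
    have hbnd : ∀ n : ℕ, ‖F (μ • x + μ • y) n - (μ • F x n + μ • F y n)‖
        ≤ φ ((2:ℂ)^n • x) ((2:ℂ)^n • y) 0 / 2^n := by
      intro n
      set a := (2:ℂ)^n • x with ha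
      set b := (2:ℂ)^n • y with hb
      have e2 : (2:ℂ)^n • (μ • x + μ • y) = μ • a + μ • b := by
        rw [smul_add, ha, hb, smul_smul, smul_smul, smul_smul, smul_smul, mul_comm]
      have e1 : F (μ • x + μ • y) n - (μ • F x n + μ • F y n)
          = c n • ((h (μ • a + μ • b) : 𝓑) - μ • (h a : 𝓑) - μ • (h b : 𝓑)) := by
        simp only [hF, e2, ← ha, ← hb, smul_sub, smul_smul, mul_comm]
        abel
      rw [e1, norm_smul, hcnorm]
      rw [div_eq_inv_mul]
      exact mul_le_mul_of_nonneg_left (keyadd μ hμ a b) (by positivity)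
    have hsm := hsum x y 0
    simp only [smul_zero] at hsm
    exact squeeze_zero (fun n => norm_nonneg _) hbnd hsm.tendsto_atTop_zero
  have hadd : ∀ x y : A, g (x + y) = g x + g y := by
    intro x y; simpa using hmu 1 (by simp) x y
  have g0 : g 0 = 0 := by
    refine tendsto_nhds_unique (hg 0) ?_
    have he : F 0 = fun _ : ℕ => (0:𝓑) := funext fun n => by simp [hF, h0]
    rw [he]
    exact tendsto_const_nhds
  have hunit : ∀ (μ : ℂ), ‖μ‖ = 1 → ∀ x : A, g (μ • x) = μ • g x := by
    intro μ hμ x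
    simpa [g0] using hmu μ hμ x 0
  have hdouble : ∀ x : A, g ((2:ℂ) • x) = (2:ℂ) • g x := by
    intro x
    rw [two_smul, hadd, ← two_smul ℂ]
  have hpow : ∀ (k : ℕ) (x : A), g ((2:ℂ)^k • x) = (2:ℂ)^k • g x := by
    intro k
    induction k with
    | zero => intro x; simp
    | succ k ih =>
        intro x
        have : (2:ℂ)^(k+1) • x = (2:ℂ) • ((2:ℂ)^k • x) := by
          rw [smul_smul, ← pow_succ']
        rw [this, hdouble, ih, smul_smul, ← pow_succ']
  -- real homogeneity for |r| ≤ 1 via unit scalars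
  have hreal1 : ∀ r : ℝ, |r| ≤ 1 → ∀ x : A, g ((r:ℂ) • x) = (r:ℂ) • g x := by
    intro r hr x
    set s : ℝ := Real.sqrt (1 - r^2) with hs
    have hr2 : r^2 ≤ 1 := by nlinarith [abs_le.mp hr]
    have hs2 : s^2 = 1 - r^2 := Real.sq_sqrt (by linarith)
    set μ₁ : ℂ := Complex.mk r s with hμ₁
    have hμnorm : ‖μ₁‖ = 1 := by
      have : Complex.normSq μ₁ = 1 := by
        simp only [Complex.normSq_mk, hμ₁]
        nlinarith [hs2]
      rw [Complex.norm_def, this, Real.sqrt_one]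
    have hμ₂norm : ‖(starRingEnd ℂ) μ₁‖ = 1 := by
      rw [RCLike.norm_conj]; exact hμnorm
    have hsumμ : μ₁ + (starRingEnd ℂ) μ₁ = ((2*r : ℝ) : ℂ) := by
      apply Complex.ext <;> simp [hμ₁, Complex.add_im] <;> ring
    have h2r : g (((2*r : ℝ):ℂ) • x) = ((2*r : ℝ):ℂ) • g x := by
      have e : ((2*r : ℝ):ℂ) • x = μ₁ • x + ((starRingEnd ℂ) μ₁) • x := by
        rw [← add_smul, hsumμ]
      rw [e, hadd, hunit μ₁ hμnorm, hunit _ hμ₂norm, ← add_smul, hsumμ]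
    have h2 : (2:ℂ) • g ((r:ℂ) • x) = (2:ℂ) • ((r:ℂ) • g x) := by
      calc (2:ℂ) • g ((r:ℂ) • x) = g ((2:ℂ) • ((r:ℂ) • x)) := (hdouble _).symm
        _ = g (((2*r : ℝ):ℂ) • x) := by rw [smul_smul]; norm_num
        _ = ((2*r : ℝ):ℂ) • g x := h2r
        _ = (2:ℂ) • ((r:ℂ) • g x) := by rw [smul_smul]; norm_num
    exact smul_right_injective 𝓑 two_ne_zero h2
  -- full real homogeneity
  have hrealall : ∀ (r : ℝ) (x : A), g ((r:ℂ) • x) = (r:ℂ) • g x := by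
    intro r x
    obtain ⟨k, hk⟩ := pow_unbounded_of_one_lt |r| one_lt_two
    have hkpos : (0:ℝ) < 2^k := by positivity
    have hs1 : |r / 2^k| ≤ 1 := by
      rw [abs_div, abs_of_pos hkpos, div_le_one hkpos]; exact hk.le
    have e : (2:ℂ)^k • (((r / 2^k : ℝ):ℂ) • x) = (r:ℂ) • x := by
      rw [smul_smul]
      congr 1
      push_cast
      field_simp
    calc g ((r:ℂ) • x) = g ((2:ℂ)^k • (((r / 2^k : ℝ):ℂ) • x)) := by rw [e]
      _ = (2:ℂ)^k • g (((r / 2^k : ℝ):ℂ) • x) := hpow k _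
      _ = (2:ℂ)^k • (((r / 2^k : ℝ):ℂ) • g x) := by rw [hreal1 _ hs1]
      _ = (r:ℂ) • g x := by
          rw [smul_smul]
          congr 1
          push_cast
          field_simp
  -- complex homogeneity
  have hsmulC : ∀ (t : ℂ) (x : A), g (t • x) = t • g x := by
    intro t x
    rcases eq_or_ne t 0 with rfl | ht
    · simp [g0]
    · have hnt : (0:ℝ) < ‖t‖ := norm_pos_iff.mpr ht
      have hntC : ((‖t‖ : ℝ) : ℂ) ≠ 0 := by
        exact_mod_cast hnt.ne'
      have habs : ((‖t‖ : ℝ) : ℂ) ≠ 0 := by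
        exact hntC
      set μ : ℂ := t / ((‖t‖ : ℝ) : ℂ) with hμdef
      have hμ : ‖μ‖ = 1 := by
        rw [hμdef, norm_div, Complex.norm_real, norm_norm, div_self hnt.ne']
      have e : t • x = ((‖t‖ : ℝ):ℂ) • (μ • x) := by
        rw [smul_smul, hμdef]
        congr 1
        field_simp
      rw [e, hrealall, hunit μ hμ, smul_smul, hμdef]
      congr 1
      field_simp
  -- the triple product identity
  have jpow : ∀ (n : ℕ) (z : A),
      jcube A hAc ((2:ℂ)^n • z) = (2:ℂ)^(3*n) • jcube A hAc z := by
    intro n z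
    apply Subtype.ext
    have hstar : star ((2:ℂ)^n) = (2:ℂ)^n := by simp
    simp only [jcube, SetLike.val_smul, star_smul, hstar, smul_mul_assoc, mul_smul_comm,
      smul_smul]
    congr 1
    ring
  have htrip : ∀ z : A, g (jcube A hAc z) = g z * star (g z) * g z := by
    intro z
    have hsm := hsum 0 0 z
    simp only [smul_zero] at hsm
    have hmono : StrictMono (fun n : ℕ => 3*n) := by
      intro a b hab; dsimp only; omega
    refine tendsto_nhds_unique ((hg (jcube A hAc z)).comp hmono.tendsto_atTop)
      (hcongr _ (fun n => F z n * star (F z n) * F z n) _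
        (((hg z).mul (hg z).star).mul (hg z)) ?_)
    have hbnd : ∀ n : ℕ,
        ‖F (jcube A hAc z) (3*n) - F z n * star (F z n) * F z n‖
          ≤ φ 0 0 ((2:ℂ)^n • z) / 2^n := by
      intro n
      have hcstar : star (c n) = c n := by simp [hc]
      have hc3 : c (3*n) = c n * (c n * c n) := by
        simp only [hc]
        rw [← mul_inv, ← mul_inv]
        congr 1
        ring
      have e_u : F (jcube A hAc z) (3*n)
          = c (3*n) • (h (jcube A hAc ((2:ℂ)^n • z)) : 𝓑) := by
        simp only [hF]
        rw [jpow]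
      have e_v : F z n * star (F z n) * F z n
          = c (3*n) • ((h ((2:ℂ)^n • z) : 𝓑) * star (h ((2:ℂ)^n • z) : 𝓑)
              * (h ((2:ℂ)^n • z) : 𝓑)) := by
        simp only [hF, star_smul, hcstar, smul_mul_assoc, mul_smul_comm, smul_smul]
        rw [hc3]
      rw [e_u, e_v, ← smul_sub, norm_smul, hcnorm]
      calc ((2:ℝ)^(3*n))⁻¹ * ‖(h (jcube A hAc ((2:ℂ)^n • z)) : 𝓑)
              - (h ((2:ℂ)^n • z) : 𝓑) * star (h ((2:ℂ)^n • z) : 𝓑) * (h ((2:ℂ)^n • z) : 𝓑)‖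
          ≤ ((2:ℝ)^(3*n))⁻¹ * φ 0 0 ((2:ℂ)^n • z) :=
            mul_le_mul_of_nonneg_left (keytrip _) (by positivity)
        _ ≤ ((2:ℝ)^n)⁻¹ * φ 0 0 ((2:ℂ)^n • z) := by
            apply mul_le_mul_of_nonneg_right _ (hφ _ _ _)
            apply inv_anti₀ (by positivity)
            exact pow_le_pow_right₀ one_le_two (by omega)
        _ = φ 0 0 ((2:ℂ)^n • z) / 2^n := by rw [div_eq_inv_mul]
    exact squeeze_zero (fun n => norm_nonneg _) hbnd hsm.tendsto_atTop_zero
  -- assemble the map T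
  refine ⟨fun x => ⟨g x, hgB x⟩, ⟨?_, ?_, ?_, ?_⟩, ?_⟩
  · intro x y
    apply Subtype.ext
    exact hadd x y
  · intro t x
    apply Subtype.ext
    exact hsmulC t x
  · intro z
    exact htrip z
  · intro x
    exact hbound x
  -- uniqueness
  · intro T' ⟨ha', hs', ht', hb'⟩
    funext x
    apply Subtype.ext
    show (T' x : 𝓑) = g x
    have hsm2 : ∀ m n : ℕ, (2:ℂ)^m • ((2:ℂ)^n • x) = (2:ℂ)^(m+n) • x := by
      intro m n
      rw [smul_smul, ← pow_add]
    have key : ∀ n : ℕ, ‖(T' x : 𝓑) - g x‖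
        ≤ ∑' m : ℕ, φ ((2:ℂ)^(m+n) • x) ((2:ℂ)^(m+n) • x) 0 / 2^(m+n) := by
      intro n
      set a : A := (2:ℂ)^n • x with ha
      have hT'pow : (T' a : 𝓑) = (2:ℂ)^n • (T' x : 𝓑) := by
        rw [ha, hs']; simp
      have hTpow : g a = (2:ℂ)^n • g x := hpow n x
      have e : (T' x : 𝓑) - g x = c n • ((T' a : 𝓑) - g a) := by
        rw [hT'pow, hTpow, smul_sub, smul_smul, smul_smul]
        simp only [hc]
        rw [inv_mul_cancel₀ (pow_ne_zero _ (two_ne_zero)), one_smul, one_smul]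
      have tri : ‖(T' a : 𝓑) - g a‖ ≤ ‖(h a : 𝓑) - (T' a : 𝓑)‖ + ‖(h a : 𝓑) - g a‖ := by
        have := dist_triangle_left (T' a : 𝓑) (g a) (h a : 𝓑)
        simpa [dist_eq_norm] using this
      have hΦ : ‖(T' a : 𝓑) - g a‖
          ≤ ∑' m : ℕ, φ ((2:ℂ)^m • a) ((2:ℂ)^m • a) 0 / 2^m := by
        refine tri.trans ?_
        have h1 := hb' a
        have h2 := hbound a
        calc ‖(h a : 𝓑) - (T' a : 𝓑)‖ + ‖(h a : 𝓑) - g a‖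
            ≤ (1/2) * (∑' m : ℕ, φ ((2:ℂ)^m • a) ((2:ℂ)^m • a) 0 / 2^m)
              + (1/2) * (∑' m : ℕ, φ ((2:ℂ)^m • a) ((2:ℂ)^m • a) 0 / 2^m) :=
              add_le_add h1 h2
          _ = ∑' m : ℕ, φ ((2:ℂ)^m • a) ((2:ℂ)^m • a) 0 / 2^m := by ring
      calc ‖(T' x : 𝓑) - g x‖
          = ((2:ℝ)^n)⁻¹ * ‖(T' a : 𝓑) - g a‖ := by rw [e, norm_smul, hcnorm]
        _ ≤ ((2:ℝ)^n)⁻¹ * ∑' m : ℕ, φ ((2:ℂ)^m • a) ((2:ℂ)^m • a) 0 / 2^m :=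
            mul_le_mul_of_nonneg_left hΦ (by positivity)
        _ = ∑' m : ℕ, φ ((2:ℂ)^(m+n) • x) ((2:ℂ)^(m+n) • x) 0 / 2^(m+n) := by
            rw [← tsum_mul_left]
            refine tsum_congr fun m => ?_
            rw [ha, hsm2 m n, pow_add]
            ring
    have htail : Tendsto
        (fun n : ℕ => ∑' m : ℕ, φ ((2:ℂ)^(m+n) • x) ((2:ℂ)^(m+n) • x) 0 / 2^(m+n))
        atTop (𝓝 0) :=
      tendsto_sum_nat_add (fun k : ℕ => φ ((2:ℂ)^k • x) ((2:ℂ)^k • x) 0 / 2^k)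
    have hle0 : ‖(T' x : 𝓑) - g x‖ ≤ 0 := ge_of_tendsto' htail key
    have := norm_le_zero_iff.mp hle0
    exact sub_eq_zero.mp this
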